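/- Let v₂ < 0 < v₁ be real numbers, λ > 0, ξ > 0, t > 0, and let x ∈ ℝ satisfy v₂t < x < v₁t and x ≠ 0; set M_x = max(x/v₁, x/v₂) (so that 0 < M_x < t). Then ∫_{M_x}^{t} e^{−ξs}·(x − v₂s)/(1 + λs)² ds = ((v₂ + λx)/λ²)·( e^{−ξM_x}/(1 + λM_x) − e^{−ξt}/(1 + λt) ) − (e^{ξ/λ}/λ²)·( xξ + v₂(λ + ξ)/λ )·Γ(0, (M_x + 1/λ)ξ, (t + 1/λ)ξ). -/

import Mathlib

open MeasureTheory Real Filter Topology Set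

noncomputable section

namespace TelegraphReset

open Classical in
/-- Real-valued indicator of a proposition. -/
def ind (P : Prop) : ℝ := if P then 1 else 0

/-- Generalized incomplete gamma function `Γ(0, z₀, z₁) = ∫_{z₀}^{z₁} u⁻¹ e^{-u} du`. -/
def iGamma (z₀ z₁ : ℝ) : ℝ := ∫ u in z₀..z₁, u⁻¹ * Real.exp (-u)

/-- Upper incomplete gamma function `Γ(0, a) = ∫_a^∞ u⁻¹ e^{-u} du`. -/
def uGamma (a : ℝ) : ℝ := ∫ u in Set.Ioi a, u⁻¹ * Real.exp (-u)

/-- `τ(x,t) = (x - v₂ t)/(v₁ - v₂)`. -/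
def tauF (v₁ v₂ x t : ℝ) : ℝ := (x - v₂ * t) / (v₁ - v₂)

/-- The two velocities, indexed by `1` and `2`. -/
def vel (v₁ v₂ : ℝ) : ℕ → ℝ := fun n => if n = 1 then v₁ else v₂

/-- `Γ_λ^ξ(x,t)`, defined piecewise according to the sign of `v₂`. -/
def GamL (v₁ v₂ lam xi x t : ℝ) : ℝ :=
  if v₂ < 0 then iGamma ((max (x / v₁) (x / v₂) + 1 / lam) * xi) ((t + 1 / lam) * xi)
  else iGamma ((x / v₁ + 1 / lam) * xi) ((min (x / v₂) t + 1 / lam) * xi)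

/-- `Θ_λ^ξ(x,t)`, defined piecewise according to the sign of `v₂`. -/
def Theta (v₁ v₂ lam xi x t : ℝ) : ℝ :=
  if v₂ < 0 then
    Real.exp (-(xi * max (x / v₁) (x / v₂))) / (1 + lam * max (x / v₁) (x / v₂))
      - Real.exp (-(xi * t)) / (1 + lam * t)
  else
    Real.exp (-(xi * (x / v₁))) / (1 + lam * (x / v₁))
      - Real.exp (-(xi * min (x / v₂) t)) / (1 + lam * min (x / v₂) t)

/-- Closed-form sub-density `P_{j,j}(x,t)` (Eq. (21)). -/
def Pss (v₁ v₂ lam xi : ℝ) (j : ℕ) (x t : ℝ) : ℝ :=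
  ind (v₂ * t < x ∧ x < v₁ * t) * Real.exp (-(xi * t)) * lam ^ 2 *
      tauF v₁ v₂ x t ^ (2 - j) * (t - tauF v₁ v₂ x t) ^ (j - 1) /
      ((v₁ - v₂) * (1 + lam * t) ^ 2)
  + Real.sign (vel v₁ v₂ j) * ind (0 < x / vel v₁ v₂ j ∧ x / vel v₁ v₂ j < t) * xi *
      Real.exp (-(xi * (x / vel v₁ v₂ j))) / (vel v₁ v₂ j + lam * x)
  + ind (min (v₂ * t) 0 < x ∧ x < v₁ * t) *
      ((-1 : ℝ) ^ (3 - j) * (xi * (vel v₁ v₂ (3 - j) + lam * x) / (v₁ - v₂) ^ 2) *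
          Theta v₁ v₂ lam xi x t
        + (-1 : ℝ) ^ j * (xi * Real.exp (xi / lam) / (v₁ - v₂) ^ 2) *
            (vel v₁ v₂ (3 - j) * (lam + xi) / lam + x * xi) * GamL v₁ v₂ lam xi x t)

/-- Closed-form sub-density `P_{3-j,j}(x,t)` (Eq. (22)). -/
def Pos (v₁ v₂ lam xi : ℝ) (j : ℕ) (x t : ℝ) : ℝ :=
  ind (v₂ * t < x ∧ x < v₁ * t) * Real.exp (-(xi * t)) * lam *
      (1 + lam * tauF v₁ v₂ x t ^ (j - 1) * (t - tauF v₁ v₂ x t) ^ (2 - j)) /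
      ((v₁ - v₂) * (1 + lam * t) ^ 2)
  + ind (min (v₂ * t) 0 < x ∧ x < v₁ * t) *
      ((-1 : ℝ) ^ j * (xi * (vel v₁ v₂ (3 - j) + lam * x) / (v₁ - v₂) ^ 2) *
          Theta v₁ v₂ lam xi x t
        + (-1 : ℝ) ^ (3 - j) * (xi * Real.exp (xi / lam) / (v₁ - v₂) ^ 2) *
            (vel v₁ v₂ j * (lam + xi) / lam + x * xi
              + (-1 : ℝ) ^ j * xi * (v₁ - v₂) / lam) * GamL v₁ v₂ lam xi x t)

/-- Closed-form reset density `p̃(x,t|v_j)` (Eq. (37)). -/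
def pTil (v₁ v₂ lam xi : ℝ) (j : ℕ) (x t : ℝ) : ℝ :=
  Real.sign (vel v₁ v₂ j) * ind (0 < x / vel v₁ v₂ j ∧ x / vel v₁ v₂ j < t) * xi *
      Real.exp (-(xi * (x / vel v₁ v₂ j))) / (vel v₁ v₂ j + lam * x)
  + ind (v₂ * t < x ∧ x < v₁ * t) * lam * Real.exp (-(xi * t)) /
      ((v₁ - v₂) * (1 + lam * t))
  + ind (min (v₂ * t) 0 < x ∧ x < v₁ * t) *
      (xi * Real.exp (xi / lam) / (v₁ - v₂)) * GamL v₁ v₂ lam xi x t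

/-- First moment `E_j[X̃(t)]` (Eq. (54)). -/
def Emom (v₁ v₂ lam xi : ℝ) (j : ℕ) (t : ℝ) : ℝ :=
  (1 - Real.exp (-(xi * t))) *
      ((v₁ + v₂) / (2 * xi) + (vel v₁ v₂ j - vel v₁ v₂ (3 - j)) / (2 * lam))
  - xi * Real.exp (xi / lam) * (vel v₁ v₂ j - vel v₁ v₂ (3 - j)) / (2 * lam ^ 2) *
      iGamma (xi / lam) (xi / lam * (1 + lam * t))
  + t * Real.exp (-(xi * t)) * (vel v₁ v₂ j - vel v₁ v₂ (3 - j)) / (2 * (1 + lam * t))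

/-- Second moment `E_j[X̃²(t)]` (Eq. (55)). -/
def Smom (v₁ v₂ lam xi : ℝ) (j : ℕ) (t : ℝ) : ℝ :=
  (1 - Real.exp (-(xi * t))) *
      (2 * (v₁ ^ 2 + v₁ * v₂ + v₂ ^ 2) / (3 * xi ^ 2)
        + (2 * vel v₁ v₂ j ^ 2 - v₁ * v₂ - vel v₁ v₂ (3 - j) ^ 2) / (3 * lam) *
            (1 / xi - 1 / lam))
  - t * Real.exp (-(xi * t)) *
      (2 * (v₁ ^ 2 + v₁ * v₂ + v₂ ^ 2) / (3 * xi)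
        + (2 * vel v₁ v₂ j ^ 2 - v₁ * v₂ - vel v₁ v₂ (3 - j) ^ 2) /
            (3 * lam * (1 + lam * t)))
  + xi * Real.exp (xi / lam) *
      (2 * vel v₁ v₂ j ^ 2 - v₁ * v₂ - vel v₁ v₂ (3 - j) ^ 2) / (3 * lam ^ 3) *
      iGamma (xi / lam) (xi / lam * (1 + lam * t))

/-- First moment of the reset-free process. -/
def m1 (v₁ v₂ lam : ℝ) (j : ℕ) (t : ℝ) : ℝ :=
  (v₁ + v₂) * t / 2 + (vel v₁ v₂ j - vel v₁ v₂ (3 - j)) * t / (2 * (1 + lam * t))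

/-- Second moment of the reset-free process (Eq. (63)). -/
def m2 (v₁ v₂ lam : ℝ) (j : ℕ) (t : ℝ) : ℝ :=
  t ^ 2 * (3 * vel v₁ v₂ j ^ 2 + lam * t * (v₁ ^ 2 + v₁ * v₂ + v₂ ^ 2)) /
    (3 * (1 + lam * t))


/-- Key integral identity (Eqs. (29)/(31)) used in the proof of Theorem 4.1. -/
theorem integral_identity (v₁ v₂ lam xi t x : ℝ)
    (hv2 : v₂ < 0) (hv1 : 0 < v₁) (hlam : 0 < lam) (hxi : 0 < xi) (ht : 0 < t)
    (hx1 : v₂ * t < x) (hx2 : x < v₁ * t) (hx0 : x ≠ 0) :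
    ∫ s in (max (x / v₁) (x / v₂))..t,
        Real.exp (-(xi * s)) * (x - v₂ * s) / (1 + lam * s) ^ 2
      = (v₂ + lam * x) / lam ^ 2 *
          (Real.exp (-(xi * max (x / v₁) (x / v₂))) / (1 + lam * max (x / v₁) (x / v₂))
            - Real.exp (-(xi * t)) / (1 + lam * t))
        - Real.exp (xi / lam) / lam ^ 2 * (x * xi + v₂ * (lam + xi) / lam) *
            iGamma ((max (x / v₁) (x / v₂) + 1 / lam) * xi) ((t + 1 / lam) * xi) := by
  set M : ℝ := max (x / v₁) (x / v₂) with hM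
  have hM0 : 0 < M := by
    rcases hx0.lt_or_gt with h | h
    · exact lt_max_of_lt_right (div_pos_of_neg_of_neg h hv2)
    · exact lt_max_of_lt_left (div_pos h hv1)
  have hMt : M < t := by
    apply max_lt
    · rcases le_or_gt x 0 with h | h
      · exact lt_of_le_of_lt (div_nonpos_of_nonpos_of_nonneg h hv1.le) ht
      · exact (div_lt_iff₀ hv1).2 (by linarith [hx2])
    · rcases le_or_gt 0 x with h | h
      · exact lt_of_le_of_lt (div_nonpos_of_nonneg_of_nonpos h hv2.le) ht
      · rw [div_lt_iff_of_neg hv2]; linarith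
  have hden : ∀ s ∈ Set.uIcc M t, 0 < 1 + lam * s := by
    intro s hs
    rw [Set.uIcc_of_le hMt.le] at hs
    nlinarith [hs.1]
  have hdenM : (0:ℝ) < 1 + lam * M := by nlinarith
  have hdent : (0:ℝ) < 1 + lam * t := by nlinarith
  set A : ℝ := (v₂ + lam * x) / lam ^ 2 with hA
  set C : ℝ := -((x * xi + v₂ * (lam + xi) / lam) / lam ^ 2) with hC
  set K : ℝ → ℝ := fun s => Real.exp (-(xi * s)) * lam / (1 + lam * s) with hK
  set F : ℝ → ℝ := fun s => -(A * Real.exp (-(xi * s)) / (1 + lam * s)) with hF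
  set F' : ℝ → ℝ := fun s =>
    A * Real.exp (-(xi * s)) * (xi * (1 + lam * s) + lam) / (1 + lam * s) ^ 2 with hF'
  -- derivative
  have hderiv : ∀ s ∈ Set.uIcc M t, HasDerivAt F (F' s) s := by
    intro s hs
    have hd := hden s hs
    have h1 : HasDerivAt (fun s => A * Real.exp (-(xi * s)))
        (A * (Real.exp (-(xi * s)) * (-xi))) s := by
      have : HasDerivAt (fun s : ℝ => -(xi * s)) (-xi) s := by
        exact (((hasDerivAt_id s).const_mul xi).neg).congr_deriv (by ring)
      exact (this.exp).const_mul A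
    have h2 : HasDerivAt (fun s : ℝ => 1 + lam * s) lam s := by
      simpa using ((hasDerivAt_id s).const_mul lam).const_add 1
    have := (h1.div h2 hd.ne').neg
    refine this.congr_deriv ?_
    rw [hF']
    field_simp
    ring
  have hcontF' : ContinuousOn F' (Set.uIcc M t) := by
    apply ContinuousOn.div
    · fun_prop
    · fun_prop
    · intro s hs; exact pow_ne_zero 2 (hden s hs).ne'
  have hcontK : ContinuousOn K (Set.uIcc M t) := by
    apply ContinuousOn.div
    · fun_prop
    · fun_prop
    · intro s hs; exact (hden s hs).ne'
  have hintF' : IntervalIntegrable F' volume M t :=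
    hcontF'.intervalIntegrable
  have hintK : IntervalIntegrable (fun s => C * K s) volume M t :=
    (hcontK.const_smul C).intervalIntegrable
  -- split the integrand
  have hsplit : ∫ s in M..t, Real.exp (-(xi * s)) * (x - v₂ * s) / (1 + lam * s) ^ 2
      = (∫ s in M..t, F' s) + ∫ s in M..t, C * K s := by
    rw [← intervalIntegral.integral_add hintF' hintK]
    apply intervalIntegral.integral_congr
    intro s hs
    have hd := hden s hs
    simp only [hF', hK, hC, hA]
    field_simp
    ring
  -- FTC
  have hFTC : ∫ s in M..t, F' s = F t - F M :=
    intervalIntegral.integral_eq_sub_of_hasDerivAt hderiv hintF'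
  -- iGamma substitution
  have hiG : iGamma ((M + 1 / lam) * xi) ((t + 1 / lam) * xi)
      = Real.exp (-(xi / lam)) * ∫ s in M..t, K s := by
    have h1 : (∫ u in (M + 1/lam)..(t + 1/lam), (u * xi)⁻¹ * Real.exp (-(u * xi)))
        = xi⁻¹ • ∫ u in (M + 1/lam) * xi..(t + 1/lam) * xi, u⁻¹ * Real.exp (-u) :=
      intervalIntegral.integral_comp_mul_right (fun u => u⁻¹ * Real.exp (-u)) hxi.ne'
    have h2 : (∫ s in M..t, ((s + 1/lam) * xi)⁻¹ * Real.exp (-((s + 1/lam) * xi)))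
        = ∫ u in (M + 1/lam)..(t + 1/lam), (u * xi)⁻¹ * Real.exp (-(u * xi)) :=
      intervalIntegral.integral_comp_add_right (fun u => (u * xi)⁻¹ * Real.exp (-(u * xi)))
        (1/lam)
    have h3 : iGamma ((M + 1 / lam) * xi) ((t + 1 / lam) * xi)
        = xi • ∫ s in M..t, ((s + 1/lam) * xi)⁻¹ * Real.exp (-((s + 1/lam) * xi)) := by
      rw [h2, h1, iGamma, smul_smul, mul_inv_cancel₀ hxi.ne', one_smul]
    rw [h3, smul_eq_mul, ← intervalIntegral.integral_const_mul,
      ← intervalIntegral.integral_const_mul]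
    apply intervalIntegral.integral_congr
    intro s hs
    have hd := hden s hs
    have hs0 : 0 < s + 1/lam := by
      have h' : 0 < lam * (s + 1/lam) := by
        have heq : lam * (s + 1/lam) = 1 + lam * s := by field_simp; ring
        rw [heq]; exact hd
      nlinarith [h']
    simp only [hK]
    have hexp : -((s + 1/lam) * xi) = -(xi * s) + -(xi/lam) := by field_simp; ring
    rw [hexp, Real.exp_add]
    rw [mul_comm (s + 1/lam) xi, mul_inv]
    have h6 : (0:ℝ) < xi + xi * lam * s := by nlinarith [mul_pos hxi hd]
    have h7 : (xi + xi * lam * s) * (xi + xi * lam * s)⁻¹ = 1 := mul_inv_cancel₀ h6.ne'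
    field_simp
    simp only [neg_div, div_eq_mul_inv, neg_mul]
    ring
  -- put everything together
  rw [hsplit, hFTC, intervalIntegral.integral_const_mul, hiG]
  have h5 : Real.exp (xi / lam) * Real.exp (-(xi / lam)) = 1 := by
    rw [← Real.exp_add]; simp
  set J := ∫ s in M..t, K s with hJ
  have hrw : Real.exp (xi / lam) / lam ^ 2 * (x * xi + v₂ * (lam + xi) / lam) *
        (Real.exp (-(xi / lam)) * J)
      = Real.exp (xi / lam) * Real.exp (-(xi / lam)) *
        ((x * xi + v₂ * (lam + xi) / lam) / lam ^ 2 * J) := by ring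
  rw [hrw, h5, one_mul]
  simp only [hF, hC, hA]
  ring


end TelegraphReset
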